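/- Let E be a real Banach space, K ≥ 0, and v : E → E a K-Lipschitz map. Let T : E → E be a linear isometric equivalence of E that commutes with v, i.e. v (T x) = T (v x) for all x ∈ E. Suppose g : ℝ → E is differentiable on the interval [0, τ) and satisfies the ODE g'(t) = v (g t) for all t ∈ [0, τ), and that the initial value is T-invariant: T (g 0) = g 0. Then the whole trajectory is T-invariant: T (g t) = g t for every t ∈ [0, τ). (This is the abstract uniqueness argument behind the paper's Lemma on Preservation of Isometries: the pulled-back solution t ↦ T (g t) solves the same ODE with the same initial data, hence coincides with g by uniqueness of solutions to Lipschitz ODEs.) -/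

import Mathlib

/-- abstract preservation of a single symmetry along a Lipschitz ODE.
Let `E` be a real Banach space, `K ≥ 0`, and `v : E → E` a `K`-Lipschitz map.
Let `T : E ≃ₗᵢ[ℝ] E` be a linear isometric equivalence commuting with `v`.
If `g : ℝ → E` is differentiable on `[0, τ)` with `g' t = v (g t)` there, and
`T (g 0) = g 0`, then `T (g t) = g t` for every `t ∈ [0, τ)`. -/
theorem symmetry_preserved_along_lipschitz_ODE
    {E : Type*} [NormedAddCommGroup E] [NormedSpace ℝ E] [CompleteSpace E]
    (K : NNReal) (v : E → E) (hv : LipschitzWith K v)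
    (T : E ≃ₗᵢ[ℝ] E) (hcomm : ∀ x : E, v (T x) = T (v x))
    (τ : ℝ) (g : ℝ → E)
    (hg : ∀ t ∈ Set.Ico (0 : ℝ) τ, HasDerivAt g (v (g t)) t)
    (h0 : T (g 0) = g 0) :
    ∀ t ∈ Set.Ico (0 : ℝ) τ, T (g t) = g t := by
  intro t ht
  obtain ⟨ht0, htτ⟩ := ht
  have hsub : Set.Icc (0 : ℝ) t ⊆ Set.Ico (0 : ℝ) τ :=
    fun s hs => ⟨hs.1, lt_of_le_of_lt hs.2 htτ⟩
  have hsub' : Set.Ico (0 : ℝ) t ⊆ Set.Ico (0 : ℝ) τ :=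
    fun s hs => ⟨hs.1, lt_trans hs.2 htτ⟩
  have hgc : ContinuousOn g (Set.Icc 0 t) :=
    fun s hs => ((hg s (hsub hs)).continuousAt).continuousWithinAt
  have hTg : ∀ s ∈ Set.Ico (0 : ℝ) t,
      HasDerivAt (fun u => T (g u)) (v (T (g s))) s := by
    intro s hs
    have := (T.toContinuousLinearEquiv.toContinuousLinearMap.hasFDerivAt).comp_hasDerivAt s
      (hg s (hsub' hs))
    simpa [hcomm, Function.comp_def] using this
  have key : Set.EqOn (fun u => T (g u)) g (Set.Icc 0 t) := by
    apply ODE_solution_unique_of_mem_Icc_right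
      (v := fun _ x => v x) (s := fun _ => Set.univ)
      (fun _ _ => hv.lipschitzOnWith)
      (T.continuous.comp_continuousOn hgc)
    · intro s hs; exact (hTg s hs).hasDerivWithinAt
    · intro s hs; trivial
    · exact hgc
    · intro s hs; exact (hg s (hsub' hs)).hasDerivWithinAt
    · intro s hs; trivial
    · exact h0
  exact key (Set.mem_Icc.mpr ⟨ht0, le_refl t⟩)
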